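/- Let θ_1,…,θ_n ∈ (0,π/2) with ∑_{i=1}^n θ_i = π and set σ = π/n. Then 2 cos σ ∑_{i=1}^n sin θ_i ≥ ∑_{i=1}^n sin θ_i cos θ_i + n sin σ cos σ · cos σ / cos σ, i.e., 2 cos σ ∑_{i=1}^n sin θ_i ≥ ∑_{i=1}^n sin θ_i cos θ_i + n tan σ (cos σ)², with equality if and only if θ_1 = ⋯ = θ_n = σ. -/

import Mathlib

open Real

private lemma Fderiv15 (c x : ℝ) :
    HasDerivAt (fun x => 2*c*Real.sin x - Real.sin x * Real.cos x - x)
      (2*Real.cos x*(c - Real.cos x)) x := by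
  have h1 : HasDerivAt (fun x => 2*c*Real.sin x) (2*c*Real.cos x) x := by
    simpa [mul_comm] using (Real.hasDerivAt_sin x).const_mul (2*c)
  have h2 : HasDerivAt (fun x => Real.sin x * Real.cos x)
      (Real.cos x * Real.cos x + Real.sin x * (-Real.sin x)) x :=
    (Real.hasDerivAt_sin x).mul (Real.hasDerivAt_cos x)
  have h3 := (h1.sub h2).sub (hasDerivAt_id x)
  exact h3.congr_deriv (by linear_combination (Real.sin_sq_add_cos_sq x))

private lemma key15 (σ : ℝ) (hσ0 : 0 < σ) (hσ2 : σ < π/2) {x : ℝ}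
    (hx0 : 0 < x) (hx2 : x < π/2) :
    2*Real.cos σ*Real.sin σ - Real.sin σ*Real.cos σ - σ
      ≤ 2*Real.cos σ*Real.sin x - Real.sin x * Real.cos x - x ∧
    (2*Real.cos σ*Real.sin x - Real.sin x * Real.cos x - x
      = 2*Real.cos σ*Real.sin σ - Real.sin σ*Real.cos σ - σ → x = σ) := by
  set c := Real.cos σ with hc
  set F : ℝ → ℝ := fun x => 2*c*Real.sin x - Real.sin x * Real.cos x - x with hF
  have cont : Continuous F := by fun_prop
  have hpi : (0:ℝ) < π := Real.pi_pos
  have anti : StrictAntiOn F (Set.Icc 0 σ) := by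
    apply strictAntiOn_of_deriv_neg (convex_Icc 0 σ) cont.continuousOn
    intro y hy
    rw [interior_Icc] at hy
    rw [(Fderiv15 c y).deriv]
    have h1 : 0 < Real.cos y := Real.cos_pos_of_mem_Ioo ⟨by linarith [hy.1], by linarith [hy.2]⟩
    have h2 : Real.cos σ < Real.cos y :=
      Real.cos_lt_cos_of_nonneg_of_le_pi hy.1.le (by linarith) hy.2
    nlinarith
  have mono : StrictMonoOn F (Set.Icc σ (π/2)) := by
    apply strictMonoOn_of_deriv_pos (convex_Icc σ (π/2)) cont.continuousOn
    intro y hy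
    rw [interior_Icc] at hy
    rw [(Fderiv15 c y).deriv]
    have h1 : 0 < Real.cos y := Real.cos_pos_of_mem_Ioo ⟨by linarith [hy.1], hy.2⟩
    have h2 : Real.cos y < Real.cos σ :=
      Real.cos_lt_cos_of_nonneg_of_le_pi hσ0.le (by linarith [hy.2]) hy.1
    nlinarith
  rcases lt_trichotomy x σ with h | h | h
  · have := anti ⟨hx0.le, h.le⟩ ⟨hσ0.le, le_refl σ⟩ h
    exact ⟨this.le, fun he => absurd he (by simp only [hF] at this ⊢; linarith)⟩
  · subst h; exact ⟨le_refl _, fun _ => rfl⟩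
  · have := mono ⟨le_refl σ, hσ2.le⟩ ⟨h.le, hx2.le⟩ h
    exact ⟨this.le, fun he => absurd he (by simp only [hF] at this ⊢; linarith)⟩

open Real in
theorem stmt15 (n : ℕ) (hn : 3 ≤ n)
    (θ : Fin n → ℝ) (hθ : ∀ i, θ i ∈ Set.Ioo (0:ℝ) (π / 2))
    (hsum : ∑ i, θ i = π) :
    (∑ i, sin (θ i) * cos (θ i)) + (n : ℝ) * tan (π / n) * (cos (π / n)) ^ 2
      ≤ 2 * cos (π / n) * ∑ i, sin (θ i)
    ∧ (2 * cos (π / n) * ∑ i, sin (θ i)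
        = (∑ i, sin (θ i) * cos (θ i)) + (n : ℝ) * tan (π / n) * (cos (π / n)) ^ 2
      ↔ ∀ i, θ i = π / n) := by
  have hpi : (0:ℝ) < π := Real.pi_pos
  have hn3 : (3:ℝ) ≤ (n:ℝ) := by exact_mod_cast hn
  have hn0 : (0:ℝ) < (n:ℝ) := by linarith
  have hσ0 : 0 < π / n := by positivity
  have hσ2 : π / n < π / 2 := by
    rw [div_lt_div_iff₀ hn0 (by norm_num)]
    nlinarith
  have hcpos : 0 < cos (π / n) := Real.cos_pos_of_mem_Ioo ⟨by linarith, hσ2⟩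
  have htan : tan (π / n) * cos (π / n) ^ 2 = sin (π / n) * cos (π / n) := by
    rw [Real.tan_eq_sin_div_cos]
    field_simp
  have htn : (n:ℝ) * tan (π / n) * cos (π / n) ^ 2
      = (n:ℝ) * (sin (π / n) * cos (π / n)) := by
    rw [mul_assoc, htan]
  set σ := π / n with hσdef
  set c := cos σ with hcdef
  set G : Fin n → ℝ := fun i => 2*c*sin (θ i) - sin (θ i) * cos (θ i) - θ i with hG
  set K : ℝ := 2*c*sin σ - sin σ * cos σ - σ with hK
  have hkey : ∀ i, K ≤ G i ∧ (G i = K → θ i = σ) :=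
    fun i => key15 σ hσ0 hσ2 (hθ i).1 (hθ i).2
  have hsumG : ∑ i, G i = 2*c*(∑ i, sin (θ i)) - (∑ i, sin (θ i) * cos (θ i)) - π := by
    rw [hG]
    rw [Finset.sum_sub_distrib, Finset.sum_sub_distrib, hsum, Finset.mul_sum]
  have hnσ : (n:ℝ) * σ = π := by
    rw [hσdef]; field_simp
  have hnK : (n:ℝ) * K = (n:ℝ) * (sin σ * c) - π := by
    have h : (n:ℝ) * K = (n:ℝ) * (sin σ * c) - (n:ℝ) * σ := by rw [hK]; ring
    rw [hnσ] at h; exact h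
  have hsumK : ∑ _i : Fin n, K = (n:ℝ) * K := by
    simp [Finset.sum_const, Finset.card_univ, nsmul_eq_mul]
  have hle : (n:ℝ) * K ≤ ∑ i, G i := by
    rw [← hsumK]
    exact Finset.sum_le_sum (fun i _ => (hkey i).1)
  constructor
  · rw [htn]; linarith [hle, hsumG, hnK]
  · constructor
    · intro heq
      have hsum_eq : ∑ i, G i = ∑ _i : Fin n, K := by
        rw [hsumK]
        rw [htn] at heq
        linarith [hsumG, hnK]
      have := (Finset.sum_eq_sum_iff_of_le (fun i _ => (hkey i).1)).mp hsum_eq.symm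
      intro i
      exact (hkey i).2 ((this i (Finset.mem_univ i)).symm)
    · intro hall
      have h1 : ∑ i, sin (θ i) * cos (θ i) = (n:ℝ) * (sin σ * cos σ) := by
        simp only [fun i => hall i]
        simp [Finset.sum_const, Finset.card_univ, nsmul_eq_mul]
      have h2 : ∑ i, sin (θ i) = (n:ℝ) * sin σ := by
        simp only [fun i => hall i]
        simp [Finset.sum_const, Finset.card_univ, nsmul_eq_mul]
      rw [h1, h2, htn]
      ring
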